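/- Let (x^k), (y^k) be a DCA sequence for minimizing f = g − h over C with x^0 ∈ C. Suppose g is ρ_g-strongly convex on C and h is ρ_h-strongly convex on C with ρ_g + ρ_h > 0, and suppose f is bounded below on C. Then the square summable property holds: ∑_{k≥0} ‖x^{k+1} − x^k‖² < ∞; in particular ‖x^{k+1} − x^k‖ → 0 as k → ∞. -/
import Mathlib


open scoped RealInnerProductSpace
open Filter Topology

/-- square summable property of DCA under strong convexity and
lower boundedness of `f` over `C`. -/
theorem stmt_2
    {E : Type*} [NormedAddCommGroup E] [InnerProductSpace ℝ E] [FiniteDimensional ℝ E]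
    (C : Set E) (hCne : C.Nonempty) (hCclosed : IsClosed C) (hCconv : Convex ℝ C)
    (g h : E → ℝ) (hg : ConvexOn ℝ Set.univ g) (hh : ConvexOn ℝ Set.univ h)
    (f : E → ℝ) (hf : ∀ z, f z = g z - h z)
    (ρg ρh : ℝ) (hρg0 : 0 ≤ ρg) (hρh0 : 0 ≤ ρh) (hρ : 0 < ρg + ρh)
    (hsg : ConvexOn ℝ C (fun z => g z - ρg / 2 * ‖z‖ ^ 2))
    (hsh : ConvexOn ℝ C (fun z => h z - ρh / 2 * ‖z‖ ^ 2))
    (hbelow : BddBelow (f '' C))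
    (x y : ℕ → E)
    (hx0 : x 0 ∈ C)
    (hsub : ∀ k, ∀ z, h z ≥ h (x k) + ⟪y k, z - x k⟫)
    (hxC : ∀ k, x (k + 1) ∈ C)
    (hmin : ∀ k, ∀ z ∈ C, g (x (k + 1)) - ⟪y k, x (k + 1)⟫ ≤ g z - ⟪y k, z⟫) :
    Summable (fun k => ‖x (k + 1) - x k‖ ^ 2) ∧
      Tendsto (fun k => ‖x (k + 1) - x k‖) atTop (𝓝 0) := by
  have hxm : ∀ k, x k ∈ C := by
    intro k
    cases k with
    | zero => exact hx0
    | succ n => exact hxC n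
  set c : ℝ := (ρg + ρh) / 4 with hc
  have hcpos : 0 < c := by positivity
  -- descent inequality
  have hdesc : ∀ k, f (x (k + 1)) + c * ‖x (k + 1) - x k‖ ^ 2 ≤ f (x k) := by
    intro k
    set a := x (k + 1) with ha
    set b := x k with hb
    set m : E := (1/2 : ℝ) • a + (1/2 : ℝ) • b with hm
    have hmC : m ∈ C := hCconv (hxC k) (hxm k) (by norm_num) (by norm_num) (by norm_num)
    -- norm expansion
    have hnm : ‖m‖ ^ 2 = (1/2) * ‖a‖ ^ 2 + (1/2) * ‖b‖ ^ 2 - (1/4) * ‖a - b‖ ^ 2 := by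
      have h1 : ‖a + b‖ ^ 2 = ‖a‖ ^ 2 + 2 * ⟪a, b⟫ + ‖b‖ ^ 2 := norm_add_sq_real a b
      have h2 : ‖a - b‖ ^ 2 = ‖a‖ ^ 2 - 2 * ⟪a, b⟫ + ‖b‖ ^ 2 := norm_sub_sq_real a b
      have h3 : m = (1/2 : ℝ) • (a + b) := by rw [hm, smul_add]
      have h4 : ‖m‖ = |(1/2 : ℝ)| * ‖a + b‖ := by rw [h3, norm_smul, Real.norm_eq_abs]
      rw [h4]
      rw [abs_of_pos (by norm_num : (0:ℝ) < 1/2)]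
      nlinarith [h1, h2]
    have hih : ⟪y k, m⟫ = (1/2) * ⟪y k, a⟫ + (1/2) * ⟪y k, b⟫ := by
      rw [hm, inner_add_right, real_inner_smul_right, real_inner_smul_right]
    -- h strong subgradient inequality
    have hHconv := hsh.2 (hxC k) (hxm k) (by norm_num : (0:ℝ) ≤ 1/2)
      (by norm_num : (0:ℝ) ≤ 1/2) (by norm_num)
    simp only [smul_eq_mul] at hHconv
    rw [← hm] at hHconv
    have hHsub := hsub k m
    have hHsub' : ⟪y k, m - b⟫ = (1/2) * ⟪y k, a⟫ - (1/2) * ⟪y k, b⟫ := by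
      rw [inner_sub_right, hih]; ring
    rw [hHsub'] at hHsub
    have ineqH : h a ≥ h b + (⟪y k, a⟫ - ⟪y k, b⟫) + (ρh / 4) * ‖a - b‖ ^ 2 := by
      nlinarith [hHconv, hHsub, hnm]
    -- g inequality from minimality
    have hGconv := hsg.2 (hxC k) (hxm k) (by norm_num : (0:ℝ) ≤ 1/2)
      (by norm_num : (0:ℝ) ≤ 1/2) (by norm_num)
    simp only [smul_eq_mul] at hGconv
    rw [← hm] at hGconv
    have hGmin := hmin k m hmC
    rw [hih] at hGmin
    have ineqG : g a - ⟪y k, a⟫ + (ρg / 4) * ‖a - b‖ ^ 2 ≤ g b - ⟪y k, b⟫ := by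
      nlinarith [hGconv, hGmin, hnm]
    rw [hf, hf]
    have : c * ‖a - b‖ ^ 2 = (ρg / 4) * ‖a - b‖ ^ 2 + (ρh / 4) * ‖a - b‖ ^ 2 := by
      rw [hc]; ring
    linarith [ineqH, ineqG, this]
  obtain ⟨B, hB⟩ := hbelow
  have hBle : ∀ k, B ≤ f (x k) := fun k => hB ⟨x k, hxm k, rfl⟩
  -- partial sums bounded
  have hsum : ∀ n, ∑ k ∈ Finset.range n, ‖x (k + 1) - x k‖ ^ 2 ≤ (f (x 0) - B) / c := by
    intro n
    have key : ∀ n, c * ∑ k ∈ Finset.range n, ‖x (k + 1) - x k‖ ^ 2 ≤ f (x 0) - f (x n) := by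
      intro n
      induction n with
      | zero => simp
      | succ n ih =>
        rw [Finset.sum_range_succ, mul_add]
        have := hdesc n
        linarith
    have h1 := key n
    have h2 := hBle n
    rw [le_div_iff₀ hcpos]
    linarith [h1, h2, mul_comm c (∑ k ∈ Finset.range n, ‖x (k + 1) - x k‖ ^ 2)]
  have hS : Summable (fun k => ‖x (k + 1) - x k‖ ^ 2) :=
    summable_of_sum_range_le (fun k => by positivity) hsum
  refine ⟨hS, ?_⟩
  have h0 := hS.tendsto_atTop_zero
  have h2 : Tendsto (fun k => Real.sqrt (‖x (k + 1) - x k‖ ^ 2)) atTop (𝓝 (Real.sqrt 0)) :=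
    (Real.continuous_sqrt.tendsto 0).comp h0
  simpa [Real.sqrt_sq (norm_nonneg _)] using h2
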